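/- For 0 <= j <= i <= n, the number of lattice paths from (i,j) to (n,0) using steps (1,1), (1,-1), (1,0) that never go below the x-axis equals the coefficient of x^{n-i} in x^j * M(x)^{j+1}, where M is the Motzkin generating function. -/

import Mathlib

/-- Paths with steps (1,1),(1,-1),(1,0) encoded by their height increments,
starting at height `h`, staying weakly above the x-axis and ending at height 0. -/
noncomputable def latticeCount (len : ℕ) (h : ℕ) : ℕ :=
  Nat.card {l : List ℤ // l.length = len ∧ (∀ x ∈ l, x = 1 ∨ x = -1 ∨ x = 0) ∧
    (∀ m, 0 ≤ (h : ℤ) + (l.take m).sum) ∧ (h : ℤ) + l.sum = 0}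

/-- The `n`-th Motzkin number, as the number of Motzkin paths of length `n`. -/
noncomputable def motzkin (n : ℕ) : ℕ := latticeCount n 0

namespace MotzkinAux

def latticeOk (len h : ℕ) (l : List ℤ) : Prop :=
  l.length = len ∧ (∀ x ∈ l, x = 1 ∨ x = -1 ∨ x = 0) ∧
    (∀ m, 0 ≤ (h : ℤ) + (l.take m).sum) ∧ (h : ℤ) + l.sum = 0

abbrev LP (len h : ℕ) := {l : List ℤ // latticeOk len h l}

lemma latticeCount_eq (len h : ℕ) : latticeCount len h = Nat.card (LP len h) := rfl

def enc : ℤ → Fin 3 := fun x => if x = 1 then 0 else if x = -1 then 1 else 2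
def dec : Fin 3 → ℤ := ![1, -1, 0]

lemma dec_enc {x : ℤ} (hx : x = 1 ∨ x = -1 ∨ x = 0) : dec (enc x) = x := by
  rcases hx with rfl | rfl | rfl <;> norm_num [enc, dec] <;> rfl

instance LP.finite (len h : ℕ) : Finite (LP len h) := by
  let f : LP len h → List.Vector (Fin 3) len := fun l => ⟨l.1.map enc, by simp [l.2.1]⟩
  have hinj : Function.Injective f := by
    rintro ⟨l1, p1⟩ ⟨l2, p2⟩ he
    have he' : l1.map enc = l2.map enc := congrArg Subtype.val he
    have key : ∀ l : List ℤ, (∀ x ∈ l, x = 1 ∨ x = -1 ∨ x = 0) → (l.map enc).map dec = l := by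
      intro l hl
      rw [List.map_map, show l.map (dec ∘ enc) = l.map id from
        List.map_congr_left fun x hx => dec_enc (hl x hx), List.map_id]
    exact Subtype.ext (show l1 = l2 by rw [← key l1 p1.2.1, ← key l2 p2.2.1, he'])
  exact Finite.of_injective f hinj

lemma ok_cons {N h h' : ℕ} {a : ℤ} (hh : (h : ℤ) + a = (h' : ℤ))
    (ha : a = 1 ∨ a = -1 ∨ a = 0) {t : List ℤ} (ht : latticeOk N h' t) :
    latticeOk (N + 1) h (a :: t) := by
  obtain ⟨hlen, hmem, hpre, hsum⟩ := ht
  refine ⟨by simp [hlen], ?_, ?_, ?_⟩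
  · intro x hx
    rcases List.mem_cons.1 hx with rfl | hx
    · exact ha
    · exact hmem x hx
  · intro m
    cases m with
    | zero => simpa using Int.natCast_nonneg h
    | succ k =>
      have := hpre k
      simp only [List.take_succ_cons, List.sum_cons]
      linarith
  · simp only [List.sum_cons]; linarith

lemma ok_tail {N h h' : ℕ} {a : ℤ} (hh : (h : ℤ) + a = (h' : ℤ)) {t : List ℤ}
    (hl : latticeOk (N + 1) h (a :: t)) : latticeOk N h' t := by
  obtain ⟨hlen, hmem, hpre, hsum⟩ := hl
  refine ⟨by simpa using hlen, fun x hx => hmem x (List.mem_cons_of_mem _ hx), ?_, ?_⟩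
  · intro m
    have := hpre (m + 1)
    simp only [List.take_succ_cons, List.sum_cons] at this
    linarith
  · simp only [List.sum_cons] at hsum; linarith

lemma latticeCount_len_zero (h : ℕ) : latticeCount 0 h = if h = 0 then 1 else 0 := by
  rw [latticeCount_eq]
  split_ifs with h0
  · subst h0
    haveI : Unique (LP 0 0) := by
      refine ⟨⟨⟨[], ?_⟩⟩, ?_⟩
      · exact ⟨rfl, by simp, fun m => by simp, by simp⟩
      · rintro ⟨l, hl⟩
        have : l = [] := List.length_eq_zero_iff.1 hl.1
        subst this; rfl
    exact Nat.card_unique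
  · haveI : IsEmpty (LP 0 h) := by
      constructor
      rintro ⟨l, hl⟩
      have : l = [] := List.length_eq_zero_iff.1 hl.1
      subst this
      have := hl.2.2.2
      simp only [List.sum_nil, add_zero, Nat.cast_eq_zero] at this
      exact h0 this
    exact Nat.card_of_isEmpty

lemma latticeCount_succ_succ (N g : ℕ) :
    latticeCount (N + 1) (g + 1) =
      latticeCount N (g + 2) + latticeCount N g + latticeCount N (g + 1) := by
  have key : Nat.card (LP N (g + 2) ⊕ LP N g ⊕ LP N (g + 1)) = Nat.card (LP (N + 1) (g + 1)) := by
    apply Nat.card_eq_of_bijective (f := fun s =>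
      match s with
      | Sum.inl t => ⟨(1 : ℤ) :: t.1, ok_cons (by push_cast; try ring) (Or.inl rfl) t.2⟩
      | Sum.inr (Sum.inl t) =>
          ⟨(-1 : ℤ) :: t.1, ok_cons (by push_cast; try ring) (Or.inr (Or.inl rfl)) t.2⟩
      | Sum.inr (Sum.inr t) =>
          ⟨(0 : ℤ) :: t.1, ok_cons (by push_cast; try ring) (Or.inr (Or.inr rfl)) t.2⟩)
    constructor
    · rintro (t1 | t1 | t1) (t2 | t2 | t2) he <;>
        simp only [Subtype.mk.injEq, List.cons.injEq] at he <;>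
        first
          | exact absurd he.1 (by decide)
          | exact congrArg _ (Subtype.ext he.2)
          | exact congrArg _ (congrArg _ (Subtype.ext he.2))
    · rintro ⟨l, hl⟩
      cases l with
      | nil => exact absurd hl.1 (by simp)
      | cons a t =>
        rcases hl.2.1 a (by simp) with rfl | rfl | rfl
        · exact ⟨Sum.inl ⟨t, ok_tail (by push_cast; try ring) hl⟩, rfl⟩
        · exact ⟨Sum.inr (Sum.inl ⟨t, ok_tail (by push_cast; try ring) hl⟩), rfl⟩
        · exact ⟨Sum.inr (Sum.inr ⟨t, ok_tail (by push_cast; try ring) hl⟩), rfl⟩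
  rw [latticeCount_eq (N+1), ← key, Nat.card_sum, Nat.card_sum,
    latticeCount_eq N (g+2), latticeCount_eq N g, latticeCount_eq N (g+1)]
  ring

lemma latticeCount_succ_zero (N : ℕ) :
    latticeCount (N + 1) 0 = latticeCount N 1 + latticeCount N 0 := by
  have key : Nat.card (LP N 1 ⊕ LP N 0) = Nat.card (LP (N + 1) 0) := by
    apply Nat.card_eq_of_bijective (f := fun s =>
      match s with
      | Sum.inl t => ⟨(1 : ℤ) :: t.1, ok_cons (by push_cast; try ring) (Or.inl rfl) t.2⟩
      | Sum.inr t => ⟨(0 : ℤ) :: t.1, ok_cons (by push_cast; try ring) (Or.inr (Or.inr rfl)) t.2⟩)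
    constructor
    · rintro (t1 | t1) (t2 | t2) he <;>
        simp only [Subtype.mk.injEq, List.cons.injEq] at he <;>
        first
          | exact absurd he.1 (by decide)
          | exact congrArg _ (Subtype.ext he.2)
    · rintro ⟨l, hl⟩
      cases l with
      | nil => exact absurd hl.1 (by simp)
      | cons a t =>
        rcases hl.2.1 a (by simp) with rfl | rfl | rfl
        · exact ⟨Sum.inl ⟨t, ok_tail (by push_cast; try ring) hl⟩, rfl⟩
        · exfalso
          have := hl.2.2.1 1
          simp at this
        · exact ⟨Sum.inr ⟨t, ok_tail (by push_cast; try ring) hl⟩, rfl⟩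
  rw [latticeCount_eq (N+1), ← key, Nat.card_sum, latticeCount_eq N 1, latticeCount_eq N 0]

noncomputable def Mz : PowerSeries ℤ := PowerSeries.mk fun m => (motzkin m : ℤ)

lemma coeff_Mz (k : ℕ) : PowerSeries.coeff k Mz = (latticeCount k 0 : ℤ) := by
  simp [Mz, motzkin]

lemma coeff_mul_congr (C A B : PowerSeries ℤ) (n : ℕ)
    (h : ∀ k ≤ n, PowerSeries.coeff k A = PowerSeries.coeff k B) :
    PowerSeries.coeff n (C * A) = PowerSeries.coeff n (C * B) := by
  rw [PowerSeries.coeff_mul, PowerSeries.coeff_mul]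
  refine Finset.sum_congr rfl fun p hp => ?_
  rw [h p.2 (by have := Finset.HasAntidiagonal.mem_antidiagonal.1 hp; omega)]

open PowerSeries in
lemma main_lemma : ∀ L h : ℕ, (latticeCount L h : ℤ) =
    PowerSeries.coeff L (X ^ h * Mz ^ (h + 1)) := by
  intro L
  induction L using Nat.strong_induction_on with
  | _ L IH =>
  have funEq : ∀ k ≤ L, coeff k Mz = coeff k (1 + X * Mz + X ^ 2 * Mz ^ 2) := by
    intro k hk
    match k with
    | 0 =>
      rw [coeff_Mz, latticeCount_len_zero]
      simp [PowerSeries.coeff_zero_eq_constantCoeff, map_add, map_mul, map_pow]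
    | (m + 1) =>
      have hm : m < L := lt_of_lt_of_le (Nat.lt_succ_self m) hk
      have h1 := IH m hm 1
      have h0 := IH m hm 0
      rw [coeff_Mz, latticeCount_succ_zero m]
      push_cast
      rw [h1, h0]
      rw [map_add, map_add, PowerSeries.coeff_one,
        show ((X : PowerSeries ℤ) ^ 2 * Mz ^ 2) = X * (X * Mz ^ 2) by ring,
        PowerSeries.coeff_succ_X_mul, PowerSeries.coeff_succ_X_mul]
      simp only [pow_one, pow_zero, one_mul]
      simp
      ring
  intro h
  match L, h with
  | L, 0 =>
    rw [pow_zero, one_mul, zero_add, pow_one, coeff_Mz]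
  | 0, (g + 1) =>
    rw [latticeCount_len_zero]
    simp [PowerSeries.coeff_zero_eq_constantCoeff, map_mul, map_pow]
  | (m + 1), (g + 1) =>
    have hm : m < m + 1 := Nat.lt_succ_self m
    have e2 := IH m hm (g + 2)
    have e0 := IH m hm g
    have e1 := IH m hm (g + 1)
    rw [latticeCount_succ_succ m g]
    push_cast
    rw [e2, e0, e1]
    rw [show ((X : PowerSeries ℤ) ^ (g + 1) * Mz ^ (g + 1 + 1)) =
      (X ^ (g + 1) * Mz ^ (g + 1)) * Mz by ring]
    rw [coeff_mul_congr _ _ _ _ (fun k hk => funEq k hk)]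
    rw [show ((X : PowerSeries ℤ) ^ (g + 1) * Mz ^ (g + 1)) * (1 + X * Mz + X ^ 2 * Mz ^ 2) =
      X * (X ^ g * Mz ^ (g + 1)) + (X * (X ^ (g + 1) * Mz ^ (g + 1 + 1)) +
        X * (X ^ (g + 2) * Mz ^ (g + 2 + 1))) by ring]
    rw [map_add, map_add, PowerSeries.coeff_succ_X_mul, PowerSeries.coeff_succ_X_mul,
      PowerSeries.coeff_succ_X_mul]
    ring

end MotzkinAux

open PowerSeries in
/-- The number of paths from `(i,j)` to `(n,0)` staying weakly above the x-axis is the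
coefficient of `x^{n-i}` in `x^j M(x)^{j+1}`. -/
theorem X_i_j_coeff (i j n : ℕ) (hji : j ≤ i) (hin : i ≤ n) :
    (latticeCount (n - i) j : ℤ) =
      PowerSeries.coeff (n - i)
        (X ^ j * (PowerSeries.mk fun m => (motzkin m : ℤ)) ^ (j + 1)) := by
  exact MotzkinAux.main_lemma (n - i) j
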